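/- Let √ denote the branch of the square root on ℂ ∖ (−∞, 0] with positive real part. For every λ ∈ ℂ ∖ [−4, 0] and every integer x, ∫₀¹ cos(2πux)/(4 sin²(πu) + λ) du = (1/(λ √(1 + 4/λ))) · (1 + (λ/2)(1 + √(1 + 4/λ)))^(−|x|). -/

import Mathlib

open Real MeasureTheory

noncomputable section
namespace GF

variable (lam : ℂ)

def s : ℂ := (1 + 4/lam) ^ ((1:ℂ)/2)
def rho : ℂ := 1 + lam/2 * (1 + s lam)
def rho' : ℂ := 1 + lam/2 * (1 - s lam)
def den (u : ℝ) : ℂ := 4 * (Real.sin (π*u) : ℂ)^2 + lam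
def F (n : ℕ) : ℂ := ∫ u in (0:ℝ)..1, (Real.cos (2*π*u*(n:ℝ)) : ℂ) / den lam u
def g (n : ℕ) : ℂ := (lam * s lam)⁻¹ * ((rho lam)⁻¹)^n
def e (u : ℝ) : ℂ := Complex.exp ((2*π*u : ℝ) * Complex.I)

lemma abs_e (u : ℝ) : ‖e u‖ = 1 := by
  rw [e, Complex.norm_exp]; simp

lemma e_ne (u : ℝ) : e u ≠ 0 := Complex.exp_ne_zero _

lemma e_add_inv (u : ℝ) : e u + (e u)⁻¹ = 2 * (Real.cos (2*π*u) : ℂ) := by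
  rw [e, ← Complex.exp_neg]
  rw [show -((2*π*u:ℝ) * Complex.I) = ((-(2*π*u):ℝ):ℂ) * Complex.I by push_cast; ring]
  rw [Complex.exp_mul_I, Complex.exp_mul_I]
  push_cast
  rw [Complex.cos_neg, Complex.sin_neg]
  ring

lemma den_eq (u : ℝ) : den lam u = lam + 2 - 2 * (Real.cos (2*π*u) : ℂ) := by
  have hr : (4:ℝ) * Real.sin (π*u)^2 = 2 - 2 * Real.cos (2*π*u) := by
    have h1 := Real.sin_sq_add_cos_sq (π*u)
    have h2 : Real.cos (2*π*u) = 2 * Real.cos (π*u)^2 - 1 := by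
      rw [show 2*π*u = 2*(π*u) by ring]; exact Real.cos_two_mul (π*u)
    nlinarith
  rw [den, show (4 : ℂ) * (Real.sin (π*u):ℂ)^2 = ((4 * Real.sin (π*u)^2 : ℝ) : ℂ) by push_cast; ring,
    hr]
  push_cast; ring

lemma cont_den : Continuous (den lam) := by
  unfold den; fun_prop

lemma int_cos_zero (m : ℕ) (hm : 1 ≤ m) :
    (∫ u in (0:ℝ)..1, (Real.cos (2*π*u*(m:ℝ)) : ℂ)) = 0 := by
  have h1 : (fun u : ℝ => (Real.cos (2*π*u*(m:ℝ)) : ℂ)) = fun u => ((Real.cos ((2*π*m)*u) : ℝ) : ℂ) := by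
    funext u; norm_cast; ring_nf
  rw [h1, intervalIntegral.integral_ofReal]
  have hc : (2*π*(m:ℝ)) ≠ 0 := by
    have := Real.pi_pos
    have : (0:ℝ) < (m:ℝ) := by exact_mod_cast hm
    positivity
  have h2 : (∫ u in (0:ℝ)..1, Real.cos ((2*π*m)*u)) = (2*π*m)⁻¹ • ∫ x in ((2*π*(m:ℝ))*0)..((2*π*(m:ℝ))*1), Real.cos x := intervalIntegral.integral_comp_mul_left Real.cos hc
  rw [h2, integral_cos]
  have h3 : Real.sin (2*π*(m:ℝ)*1) = 0 := by
    have := Real.sin_nat_mul_pi (2*m)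
    rw [show ((2*m : ℕ):ℝ) * π = 2*π*(m:ℝ)*1 by push_cast; ring] at this
    exact this
  rw [h3]
  simp

variable {lam}
variable (hlam : ¬ (lam.im = 0 ∧ -4 ≤ lam.re ∧ lam.re ≤ 0))
include hlam

lemma hlam0 : lam ≠ 0 := by
  rintro rfl; exact hlam ⟨rfl, by norm_num, le_refl 0⟩

lemma hw_not_neg : ¬((1 + 4/lam).im = 0 ∧ (1 + 4/lam).re ≤ 0) := by
  rintro ⟨h1, h2⟩
  have h0 : lam ≠ 0 := hlam0 hlam
  have hb : lam.im = 0 := by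
    simp [Complex.add_im, Complex.div_im] at h1
    rcases h1 with h1 | h1
    · exact h1
    · exact absurd h1 h0
  have hA : lam = ((lam.re : ℝ) : ℂ) := Complex.ext rfl (by simp [hb])
  have ha0 : lam.re ≠ 0 := by
    intro h; exact h0 (by rw [hA, h]; simp)
  push_neg at hlam
  have hrange := hlam hb
  rw [hA] at h2
  have he : (1 + 4 / ((lam.re : ℝ):ℂ)).re = 1 + 4 / lam.re := by
    rw [show ((4:ℂ)) = ((4:ℝ):ℂ) by norm_num, ← Complex.ofReal_div]
    simp
  rw [he] at h2
  rcases lt_or_gt_of_ne ha0 with h | h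
  · have h4 : 4 / lam.re ≤ -1 := by linarith
    have h5 : -1 * lam.re ≤ 4 := (div_le_iff_of_neg h).mp h4
    exact absurd (hrange (by linarith)) (by push_neg; exact le_of_lt h)
  · nlinarith [div_pos (by norm_num : (0:ℝ) < 4) h]

lemma hw0 : 1 + 4/lam ≠ 0 := by
  intro h; exact hw_not_neg hlam (by rw [h]; simp)

lemma hs_re : 0 < (s lam).re := by
  rw [s, Complex.cpow_def_of_ne_zero (hw0 hlam), Complex.exp_re]
  apply mul_pos (Real.exp_pos _)
  apply Real.cos_pos_of_mem_Ioo
  have him : (Complex.log (1 + 4/lam) * (1/2)).im = Complex.arg (1 + 4/lam) / 2 := by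
    simp [Complex.mul_im, Complex.log_im]; ring
  rw [him]
  constructor
  · have := Complex.neg_pi_lt_arg (1 + 4/lam); linarith
  · have h1 := Complex.arg_le_pi (1 + 4/lam)
    have h2 : Complex.arg (1 + 4/lam) ≠ π := by
      intro h
      rcases Complex.arg_eq_pi_iff.mp h with ⟨hre, him2⟩
      exact hw_not_neg hlam ⟨him2, le_of_lt hre⟩
    have := Real.pi_pos
    have h3 : Complex.arg (1+4/lam) < π := lt_of_le_of_ne h1 h2
    linarith

lemma hs_sq : lam * s lam ^ 2 = lam + 4 := by
  have h : s lam ^ 2 = 1 + 4/lam := by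
    rw [s, sq, ← Complex.cpow_add _ _ (hw0 hlam)]; norm_num
  rw [h]; field_simp [hlam0 hlam]

lemma hrho_mul : rho lam * rho' lam = 1 := by
  rw [rho, rho']; linear_combination (-lam/4) * hs_sq hlam

lemma hrho_ne : rho lam ≠ 0 := by
  intro h
  have := hrho_mul hlam
  rw [h, zero_mul] at this
  exact zero_ne_one this

lemma hrho_inv : (rho lam)⁻¹ = rho' lam :=
  (eq_inv_of_mul_eq_one_right (hrho_mul hlam)).symm

lemma hrho_add : rho lam + (rho lam)⁻¹ = lam + 2 := by
  rw [hrho_inv hlam, rho, rho']; ring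

lemma hrho_sub : rho lam - (rho lam)⁻¹ = lam * s lam := by
  rw [hrho_inv hlam, rho, rho']; ring

lemma hls_ne : lam * s lam ≠ 0 := by
  apply mul_ne_zero (hlam0 hlam)
  intro h
  have := hs_re hlam
  rw [h] at this; simp at this

lemma habs_rho : 1 < ‖rho lam‖ := by
  have key : Complex.normSq (rho' lam) < Complex.normSq (rho lam) := by
    have e1 : rho lam = (1 + lam/2) + (lam/2 * s lam) := by rw [rho]; ring
    have e2 : rho' lam = (1 + lam/2) - (lam/2 * s lam) := by rw [rho']; ring
    rw [e1, e2, Complex.normSq_add, Complex.normSq_sub]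
    have hid : (1 + lam/2) * (starRingEnd ℂ) (lam/2 * s lam)
        = (Complex.normSq lam : ℂ) * ((starRingEnd ℂ) (s lam) + s lam * (Complex.normSq (s lam) : ℂ)) / 8 := by
      have c1 : lam * (starRingEnd ℂ) lam = (Complex.normSq lam : ℂ) := Complex.mul_conj lam
      have c2 : s lam * (starRingEnd ℂ) (s lam) = (Complex.normSq (s lam) : ℂ) := Complex.mul_conj (s lam)
      have hc : (starRingEnd ℂ) (lam/2 * s lam) = (starRingEnd ℂ) lam / 2 * (starRingEnd ℂ) (s lam) := by
        rw [map_mul, map_div₀, Complex.conj_ofNat]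
      rw [hc]
      linear_combination (-(starRingEnd ℂ) lam * (starRingEnd ℂ) (s lam) / 8) * hs_sq hlam
        + (((starRingEnd ℂ) (s lam) + s lam * (Complex.normSq (s lam) : ℂ))/8) * c1
        + (lam * (starRingEnd ℂ) lam * s lam / 8) * c2
    have hre : 0 < ((1 + lam/2) * (starRingEnd ℂ) (lam/2 * s lam)).re := by
      rw [hid]
      have heq : ((Complex.normSq lam : ℂ) * ((starRingEnd ℂ) (s lam) + s lam * (Complex.normSq (s lam) : ℂ)) / 8).re
          = Complex.normSq lam * ((s lam).re + (s lam).re * Complex.normSq (s lam)) / 8 := by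
        simp [Complex.mul_re, Complex.add_re, Complex.add_im, Complex.conj_re, Complex.conj_im,
          Complex.div_re, Complex.normSq, Complex.mul_im]
      rw [heq]
      have h1 : 0 < Complex.normSq lam := Complex.normSq_pos.mpr (hlam0 hlam)
      have h2 := hs_re hlam
      have h3 : 0 ≤ Complex.normSq (s lam) := Complex.normSq_nonneg _
      positivity
    linarith
  have h1 : ‖rho' lam‖ < ‖rho lam‖ := by
    have := Complex.sq_norm (rho lam)
    have := Complex.sq_norm (rho' lam)
    nlinarith [norm_nonneg (rho lam), norm_nonneg (rho' lam)]
  have h2 : ‖rho lam‖ * ‖rho' lam‖ = 1 := by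
    rw [← norm_mul, hrho_mul hlam, norm_one]
  nlinarith [norm_nonneg (rho' lam)]

lemma den_factor (u : ℝ) : den lam u * rho lam = (rho lam - e u) * (rho lam - (e u)⁻¹) := by
  have h1 := hrho_add hlam
  have h2 : rho lam ^2 + 1 = (lam+2) * rho lam := by
    have hne := hrho_ne hlam
    field_simp at h1
    linear_combination h1
  rw [den_eq]
  linear_combination (-1 : ℂ) * h2 + (rho lam) * e_add_inv u + (-1 : ℂ) * mul_inv_cancel₀ (e_ne u)

lemma den_ne (u : ℝ) : den lam u ≠ 0 := by
  intro h
  have hf := den_factor hlam u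
  rw [h, zero_mul] at hf
  have habs := habs_rho hlam
  rcases mul_eq_zero.mp hf.symm with h1 | h1
  · have : ‖rho lam‖ = 1 := by
      have := sub_eq_zero.mp h1
      rw [this, abs_e]
    linarith
  · have : ‖rho lam‖ = 1 := by
      have h3 := sub_eq_zero.mp h1
      rw [h3]
      rw [norm_inv, abs_e]
      norm_num
    linarith

lemma intg (m : ℕ) :
    IntervalIntegrable (fun u => (Real.cos (2*π*u*(m:ℝ)) : ℂ) / den lam u) volume 0 1 := by
  apply Continuous.intervalIntegrable
  apply Continuous.div
  · fun_prop
  · exact cont_den lam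
  · exact den_ne hlam

lemma Fbound : ∃ C : ℝ, ∀ n : ℕ, ‖F lam n‖ ≤ C := by
  obtain ⟨ε, hε, hmin⟩ := (isCompact_Icc : IsCompact (Set.Icc (0:ℝ) 1)).exists_forall_le'
    ((continuous_norm.comp (cont_den lam)).continuousOn)
    (fun u _ => (norm_pos_iff.mpr (den_ne hlam u)))
  refine ⟨ε⁻¹, fun n => ?_⟩
  have h := intervalIntegral.norm_integral_le_of_norm_le_const
    (C := ε⁻¹) (f := fun u => (Real.cos (2*π*u*(n:ℝ)) : ℂ) / den lam u) (a := 0) (b := 1) ?_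
  · rw [F]
    simpa using h
  · intro u hu
    have hu' : u ∈ Set.Icc (0:ℝ) 1 := by
      rw [Set.uIoc_of_le (by norm_num : (0:ℝ) ≤ 1)] at hu
      exact ⟨le_of_lt hu.1, hu.2⟩
    have hd := hmin u hu'
    rw [norm_div]
    have h1 : ‖(Real.cos (2*π*u*(n:ℝ)) : ℂ)‖ ≤ 1 := by
      rw [Complex.norm_real, Real.norm_eq_abs]
      exact Real.abs_cos_le_one _
    calc ‖(Real.cos (2*π*u*(n:ℝ)) : ℂ)‖ / ‖den lam u‖ ≤ 1 / ε := by
          apply div_le_div₀ (by norm_num) h1 hε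
          exact hd
      _ = ε⁻¹ := one_div ε

lemma rec0 : 2 * F lam 1 = (lam + 2) * F lam 0 - 1 := by
  have hI1 := intg hlam 1
  have hI0 := intg hlam 0
  rw [F, F, ← intervalIntegral.integral_const_mul, ← intervalIntegral.integral_const_mul]
  have key : ∀ u : ℝ, 2 * ((Real.cos (2*π*u*((1:ℕ):ℝ)) : ℂ) / den lam u)
      = (lam+2) * ((Real.cos (2*π*u*((0:ℕ):ℝ)) : ℂ) / den lam u) - 1 := by
    intro u
    have hden := den_eq lam u
    have hne := den_ne hlam u
    rw [show ((1:ℕ):ℝ) = 1 by norm_num, show ((0:ℕ):ℝ) = 0 by norm_num]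
    rw [mul_zero, Real.cos_zero, mul_one]
    push_cast at hden ⊢
    field_simp
    linear_combination hden
  simp only [key]
  rw [intervalIntegral.integral_sub (hI0.const_mul _) intervalIntegrable_const]
  rw [intervalIntegral.integral_const_mul]
  simp

lemma recn (n : ℕ) : F lam (n+2) + F lam n = (lam + 2) * F lam (n+1) := by
  have hI2 := intg hlam (n+2)
  have hI0 := intg hlam n
  have hI1 := intg hlam (n+1)
  have hcos : IntervalIntegrable (fun u : ℝ => (Real.cos (2*π*u*((n+1:ℕ):ℝ)) : ℂ)) volume 0 1 := by
    apply Continuous.intervalIntegrable; fun_prop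
  rw [F, F, F, ← intervalIntegral.integral_add hI2 hI0]
  have key : ∀ u : ℝ, (Real.cos (2*π*u*((n+2:ℕ):ℝ)) : ℂ) / den lam u + (Real.cos (2*π*u*((n:ℕ)):ℝ) : ℂ) / den lam u
      = (lam+2) * ((Real.cos (2*π*u*((n+1:ℕ):ℝ)) : ℂ) / den lam u) - (Real.cos (2*π*u*((n+1:ℕ):ℝ)) : ℂ) := by
    intro u
    have hadd : Real.cos (2*π*u*((n+2:ℕ):ℝ)) + Real.cos (2*π*u*((n:ℕ):ℝ))
        = 2 * Real.cos (2*π*u*((n+1:ℕ):ℝ)) * Real.cos (2*π*u) := by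
      rw [Real.cos_add_cos]
      push_cast
      ring_nf
    have haddC : (Real.cos (2*π*u*((n+2:ℕ):ℝ)) : ℂ) + (Real.cos (2*π*u*((n:ℕ):ℝ)) : ℂ)
        = 2 * (Real.cos (2*π*u*((n+1:ℕ):ℝ)) : ℂ) * (Real.cos (2*π*u) : ℂ) := by
      exact_mod_cast congrArg (fun t : ℝ => (t : ℂ)) hadd
    have hden := den_eq lam u
    have hne := den_ne hlam u
    push_cast at haddC hden ⊢
    field_simp
    linear_combination haddC + (Complex.cos (2*(π:ℂ)*(u:ℂ)*((n:ℂ)+1))) * hden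
  simp only [key]
  rw [intervalIntegral.integral_sub (hI1.const_mul _) hcos]
  rw [intervalIntegral.integral_const_mul]
  rw [int_cos_zero (n+1) (by omega)]
  simp

lemma grec0 : 2 * g lam 1 = (lam + 2) * g lam 0 - 1 := by
  have h1 := hrho_sub hlam
  have h2 := hrho_add hlam
  have hls := hls_ne hlam
  have hinv := mul_inv_cancel₀ hls
  apply mul_left_cancel₀ hls
  rw [g, g, pow_one, pow_zero]
  linear_combination (2*(rho lam)⁻¹ - (lam+2)) * hinv + h2 - h1

lemma grecn (n : ℕ) : g lam (n+2) + g lam n = (lam + 2) * g lam (n+1) := by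
  have h2 := hrho_add hlam
  have hR := hrho_ne hlam
  have hm := mul_inv_cancel₀ hR
  rw [g, g, g, ← h2]
  linear_combination (-((lam * s lam)⁻¹ * ((rho lam)⁻¹)^n)) * hm

lemma Dform : ∀ n : ℕ, 2*(F lam n - g lam n)
    = (F lam 0 - g lam 0) * (rho lam ^ n + ((rho lam)⁻¹) ^ n) := by
  have base1 : 2*(F lam 1 - g lam 1)
      = (F lam 0 - g lam 0) * (rho lam ^ 1 + ((rho lam)⁻¹) ^ 1) := by
    have ha := hrho_add hlam
    linear_combination rec0 hlam - grec0 hlam - (F lam 0 - g lam 0) * ha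
  have key : ∀ n : ℕ, (2*(F lam n - g lam n)
        = (F lam 0 - g lam 0) * (rho lam ^ n + ((rho lam)⁻¹) ^ n))
      ∧ (2*(F lam (n+1) - g lam (n+1))
        = (F lam 0 - g lam 0) * (rho lam ^ (n+1) + ((rho lam)⁻¹) ^ (n+1))) := by
    intro n
    induction n with
    | zero => exact ⟨by ring, base1⟩
    | succ k ih =>
      refine ⟨ih.2, ?_⟩
      have hr := recn hlam k
      have hg := grecn hlam k
      have ha := hrho_add hlam
      have hm := mul_inv_cancel₀ (hrho_ne hlam)
      have ih1 := ih.1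
      have ih2 := ih.2
      linear_combination 2*hr - 2*hg + (lam+2)*ih2 - ih1
        - (F lam 0 - g lam 0) * (rho lam ^ (k+1) + ((rho lam)⁻¹) ^ (k+1)) * ha
        + (F lam 0 - g lam 0) * (rho lam ^ k + ((rho lam)⁻¹) ^ k) * hm
  exact fun n => (key n).1

lemma D0_zero : F lam 0 - g lam 0 = 0 := by
  by_contra hD
  obtain ⟨C, hC⟩ := Fbound hlam
  set G := ‖(lam * s lam)⁻¹‖ with hG
  have hg : ∀ n : ℕ, ‖g lam n‖ ≤ G := by
    intro n
    rw [g, norm_mul, norm_pow]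
    have hle : ‖(rho lam)⁻¹‖ ≤ 1 := by
      rw [norm_inv]
      exact inv_le_one_of_one_le₀ (le_of_lt (habs_rho hlam))
    calc ‖(lam * s lam)⁻¹‖ * ‖(rho lam)⁻¹‖ ^ n
        ≤ ‖(lam * s lam)⁻¹‖ * 1 := by
          apply mul_le_mul_of_nonneg_left _ (norm_nonneg _)
          exact pow_le_one₀ (norm_nonneg _) hle
      _ = G := by rw [mul_one]
  set D0 := F lam 0 - g lam 0 with hD0
  have habs := habs_rho hlam
  have hD0pos : 0 < ‖D0‖ := norm_pos_iff.mpr hD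
  set B := 2*C + 2*G + ‖D0‖ with hB
  have bound : ∀ n : ℕ, ‖D0‖ * ‖rho lam‖ ^ n ≤ B := by
    intro n
    have h1 := Dform hlam n
    have e1 : D0 * rho lam ^ n = 2*(F lam n - g lam n) - D0 * ((rho lam)⁻¹)^n := by
      linear_combination -h1
    have e2 : ‖D0 * rho lam ^ n‖
        ≤ 2 * ‖F lam n‖ + 2 * ‖g lam n‖
          + ‖D0‖ * ‖(rho lam)⁻¹‖^n := by
      rw [e1]
      calc ‖2*(F lam n - g lam n) - D0 * ((rho lam)⁻¹)^n‖
          ≤ ‖2*(F lam n - g lam n)‖ + ‖D0 * ((rho lam)⁻¹)^n‖ := by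
            simpa [sub_eq_add_neg] using norm_add_le (2*(F lam n - g lam n)) (-(D0 * ((rho lam)⁻¹)^n))
        _ ≤ 2 * ‖F lam n‖ + 2 * ‖g lam n‖
              + ‖D0‖ * ‖(rho lam)⁻¹‖^n := by
            rw [norm_mul, norm_mul, norm_pow]
            have habs2 : ‖(2:ℂ)‖ = 2 := by norm_num
            rw [habs2]
            have h4 : ‖F lam n - g lam n‖
                ≤ ‖F lam n‖ + ‖g lam n‖ := by
              simpa [sub_eq_add_neg] using norm_add_le (F lam n) (-(g lam n))
            linarith
    have h3 : ‖D0‖ * ‖(rho lam)⁻¹‖^n ≤ ‖D0‖ := by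
      have hle : ‖(rho lam)⁻¹‖ ≤ 1 := by
        rw [norm_inv]
        exact inv_le_one_of_one_le₀ (le_of_lt habs)
      calc ‖D0‖ * ‖(rho lam)⁻¹‖^n
          ≤ ‖D0‖ * 1 := by
            apply mul_le_mul_of_nonneg_left _ (norm_nonneg _)
            exact pow_le_one₀ (norm_nonneg _) hle
        _ = _ := mul_one _
    have h5 := hC n
    have h6 := hg n
    have hfin : ‖D0‖ * ‖rho lam‖ ^ n = ‖D0 * rho lam ^ n‖ := by
      rw [norm_mul, norm_pow]
    rw [hfin]
    calc ‖D0 * rho lam ^ n‖ ≤ _ := e2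
      _ ≤ B := by rw [hB]; linarith
  obtain ⟨n, hn⟩ := pow_unbounded_of_one_lt (B / ‖D0‖) habs
  have hb := bound n
  rw [div_lt_iff₀ hD0pos] at hn
  nlinarith [mul_comm (‖D0‖) (‖rho lam‖ ^ n)]

lemma F_eq_g (n : ℕ) : F lam n = g lam n := by
  have h := Dform hlam n
  rw [D0_zero hlam, zero_mul] at h
  have : F lam n - g lam n = 0 := by linear_combination h/2
  linear_combination this

end GF

/-- Analytic continuation of the lattice Green's function formula:
for every `λ ∈ ℂ ∖ [−4, 0]` and every integer `x`,
`∫₀¹ cos(2πux)/(4 sin²(πu) + λ) du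
  = (1/(λ √(1 + 4/λ))) (1 + (λ/2)(1 + √(1 + 4/λ)))^(−|x|)`,
where the square root is the principal branch (positive real part off `(−∞, 0]`),
realized here by the principal complex power `z ^ (1/2 : ℂ)`. -/
theorem green_function_closed_form_complex (lam : ℂ)
    (hlam : ¬ (lam.im = 0 ∧ -4 ≤ lam.re ∧ lam.re ≤ 0)) (x : ℤ) :
    ∫ u in (0:ℝ)..1,
        (Real.cos (2 * π * u * (x : ℝ)) : ℂ) / (4 * (Real.sin (π * u) : ℂ) ^ 2 + lam)
      = (1 / (lam * (1 + 4 / lam) ^ ((1 : ℂ) / 2))) *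
        (1 + (lam / 2) * (1 + (1 + 4 / lam) ^ ((1 : ℂ) / 2))) ^ (-|x|) := by
  have hcos : ∀ u : ℝ, Real.cos (2*π*u*(x:ℝ)) = Real.cos (2*π*u*((x.natAbs : ℕ):ℝ)) := by
    intro u
    rw [show ((x.natAbs : ℕ):ℝ) = |(x:ℝ)| by rw [Nat.cast_natAbs (n := x)]; exact_mod_cast rfl]
    rcases le_or_gt 0 (x:ℝ) with hx | hx
    · rw [abs_of_nonneg hx]
    · rw [abs_of_neg hx, show 2*π*u*(-(x:ℝ)) = -(2*π*u*(x:ℝ)) by ring, Real.cos_neg]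
  have h1 : (∫ u in (0:ℝ)..1,
        (Real.cos (2 * π * u * (x : ℝ)) : ℂ) / (4 * (Real.sin (π * u) : ℂ) ^ 2 + lam))
      = GF.F lam x.natAbs := by
    rw [GF.F]
    apply intervalIntegral.integral_congr
    intro u _
    simp only [GF.den]
    rw [hcos u]
  rw [h1, GF.F_eq_g hlam x.natAbs, GF.g, GF.s, GF.rho, GF.s]
  rw [show |x| = (x.natAbs : ℤ) from Int.abs_eq_natAbs x, zpow_neg, zpow_natCast, ← inv_pow]
  simp only [one_div]
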